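/- arXiv:2207.03685 — 2 statements merged into one kernel-verified Lean document; each statement's English description precedes it below -/
import Mathlib

section
/- Let r ≥ 2 and let p' > r be an integer with gcd(r,p') = 1. Let ζ ∈ P_r be dominant (i.e. ⟨ζ, α_i⟩ is a nonnegative integer for all 1 ≤ i ≤ r−1) with ⟨ζ, ε_1 − ε_r⟩ ≤ p' − r. Define F(σ, α) = (rp'/2)‖α‖² − p'⟨α, δ⟩ + r⟨α, σ•(ζ+δ)⟩ − ⟨δ, σ•(ζ+δ) − ζ − δ⟩ for σ ∈ S_r, α ∈ V. Let μ ∈ P_r and suppose w ∈ S_r and λ ∈ Q_r satisfy rμ − δ + w•δ = rλ. Then for every σ ∈ S_r and every x ∈ ℚ there is a bijection between {α ∈ μ + Q_r : F(σ, α) = x} and {α ∈ Q_r : F(w⁻¹∘σ, α) = x}. (This expresses the identity (−1)^{ℓ(w)}·Γ^{r,r,p';μ}_{0,ζ}(σ) = Γ^{r,r,p';0}_{0,ζ}(w⁻¹σ) at the level of exponents.) -/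
open Finset

noncomputable section

/-- Inner product `⟨u,v⟩ = Σ_i u i * v i` on `ℚ^r`. -/
def ip {r : ℕ} (u v : Fin r → ℚ) : ℚ := ∑ i, u i * v i

/-- Action of `S_r` permuting coordinates: `(w • v) i = v (w⁻¹ i)`. -/
def pact {r : ℕ} (w : Equiv.Perm (Fin r)) (v : Fin r → ℚ) : Fin r → ℚ := fun i => v (w⁻¹ i)

/-- The Weyl vector `δ`, whose (1-indexed) `i`-th coordinate is `(r+1-2i)/2`. -/
def weylδ (r : ℕ) : Fin r → ℚ := fun j => ((r : ℚ) - 1 - 2 * ((j : ℕ) : ℚ)) / 2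

/-- Membership in `V = {v : Fin r → ℚ | Σ_i v i = 0}`. -/
def memV {r : ℕ} (v : Fin r → ℚ) : Prop := ∑ i, v i = 0

/-- Membership in the root lattice `Q_r`. -/
def memQ {r : ℕ} (v : Fin r → ℚ) : Prop := memV v ∧ ∀ i, ∃ m : ℤ, v i = (m : ℚ)

/-- Membership in the weight lattice `P_r`. -/
def memP {r : ℕ} (v : Fin r → ℚ) : Prop := memV v ∧ ∀ i j, ∃ m : ℤ, v i - v j = (m : ℚ)

/-- The first fundamental weight `Λ₁ = ε₁ - (1/r)(ε₁ + ⋯ + ε_r)`. -/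
def Lam1 (r : ℕ) : Fin r → ℚ := fun j => (if (j : ℕ) = 0 then 1 else 0) - 1 / (r : ℚ)

/-- The simple roots, 0-indexed: `srootF i = ε_{i+1} - ε_{i+2}` in 1-indexed notation. -/
def srootF {r : ℕ} (i : Fin (r - 1)) : Fin r → ℚ :=
  fun j => (if (j : ℕ) = (i : ℕ) then 1 else 0) - (if (j : ℕ) = (i : ℕ) + 1 then 1 else 0)

/-- The highest root `θ = ε₁ - ε_r`. -/
def hroot (r : ℕ) : Fin r → ℚ :=
  fun j => (if (j : ℕ) = 0 then 1 else 0) - (if (j : ℕ) = r - 1 then 1 else 0)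

/-- The set `Π_{r,n}` of weights of `L_r(nΛ₁)`:
all `nΛ₁ - a₁α₁ - ⋯ - a_{r-1}α_{r-1}` with `n ≥ a₁ ≥ ⋯ ≥ a_{r-1} ≥ 0`. -/
def PiWts (r n : ℕ) : Set (Fin r → ℚ) :=
  {v | ∃ a : Fin (r - 1) → ℤ, (∀ i, 0 ≤ a i) ∧ (∀ i, a i ≤ (n : ℤ)) ∧
        (∀ i j, i ≤ j → a j ≤ a i) ∧
        v = (n : ℚ) • Lam1 r - ∑ i, (a i : ℚ) • srootF i}

/-- The exponent `F(σ,α) = (rp'/2)‖α‖² - p'⟨α,δ⟩ + r⟨α,σ•(ζ+δ)⟩ - ⟨δ, σ•(ζ+δ) - ζ - δ⟩`. -/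
def Fexp (r p' : ℕ) (ζ : Fin r → ℚ) (σ : Equiv.Perm (Fin r)) (α : Fin r → ℚ) : ℚ :=
  ((r : ℚ) * p' / 2) * ip α α - p' * ip α (weylδ r)
    + r * ip α (pact σ (ζ + weylδ r))
    - ip (weylδ r) (pact σ (ζ + weylδ r) - ζ - weylδ r)



lemma ip_pact_pact {r : ℕ} (w : Equiv.Perm (Fin r)) (u v : Fin r → ℚ) :
    ip (pact w u) (pact w v) = ip u v := by
  simpa [ip, pact] using Equiv.sum_comp w⁻¹ (fun j => u j * v j)

lemma ip_pact_left {r : ℕ} (w : Equiv.Perm (Fin r)) (u v : Fin r → ℚ) :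
    ip (pact w u) v = ip u (pact w⁻¹ v) := by
  simpa [ip, pact] using (Equiv.sum_comp w (fun i => u (w⁻¹ i) * v i)).symm

lemma ip_add_left {r : ℕ} (u v x : Fin r → ℚ) : ip (u + v) x = ip u x + ip v x := by
  simp [ip, add_mul, Finset.sum_add_distrib]

lemma ip_add_right {r : ℕ} (u v x : Fin r → ℚ) : ip x (u + v) = ip x u + ip x v := by
  simp [ip, mul_add, Finset.sum_add_distrib]

lemma ip_sub_left {r : ℕ} (u v x : Fin r → ℚ) : ip (u - v) x = ip u x - ip v x := by
  simp [ip, sub_mul, Finset.sum_sub_distrib]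

lemma ip_sub_right {r : ℕ} (u v x : Fin r → ℚ) : ip x (u - v) = ip x u - ip x v := by
  simp [ip, mul_sub, Finset.sum_sub_distrib]

lemma ip_smul_left {r : ℕ} (a : ℚ) (u x : Fin r → ℚ) : ip (a • u) x = a * ip u x := by
  simp [ip, Finset.mul_sum, mul_assoc]

lemma ip_smul_right {r : ℕ} (a : ℚ) (u x : Fin r → ℚ) : ip x (a • u) = a * ip x u := by
  simp [ip, Finset.mul_sum, mul_comm, mul_assoc, mul_left_comm]

lemma ip_comm {r : ℕ} (u v : Fin r → ℚ) : ip u v = ip v u := by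
  simp [ip, mul_comm]

lemma pact_pact_inv {r : ℕ} (w : Equiv.Perm (Fin r)) (v : Fin r → ℚ) :
    pact w⁻¹ (pact w v) = v := by
  funext i; simp [pact]

lemma pact_pact_inv' {r : ℕ} (w : Equiv.Perm (Fin r)) (v : Fin r → ℚ) :
    pact w (pact w⁻¹ v) = v := by
  funext i; simp [pact]

lemma pact_mul {r : ℕ} (w σ : Equiv.Perm (Fin r)) (v : Fin r → ℚ) :
    pact (w⁻¹ * σ) v = pact w⁻¹ (pact σ v) := by
  funext i; simp [pact, Equiv.Perm.mul_apply]

lemma memQ_add {r : ℕ} {u v : Fin r → ℚ} (hu : memQ u) (hv : memQ v) : memQ (u + v) := by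
  obtain ⟨hu1, hu2⟩ := hu; obtain ⟨hv1, hv2⟩ := hv
  refine ⟨by simp [memV, Finset.sum_add_distrib, hu1, hv1, memV.eq_1] at *; simp [hu1, hv1], ?_⟩
  · intro i; obtain ⟨m, hm⟩ := hu2 i; obtain ⟨n, hn⟩ := hv2 i
    exact ⟨m + n, by push_cast [Pi.add_apply, hm, hn]; ring⟩

lemma memQ_sub {r : ℕ} {u v : Fin r → ℚ} (hu : memQ u) (hv : memQ v) : memQ (u - v) := by
  obtain ⟨hu1, hu2⟩ := hu; obtain ⟨hv1, hv2⟩ := hv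
  refine ⟨by simp [memV, Finset.sum_sub_distrib, hu1, hv1] at *; simp [hu1, hv1], ?_⟩
  · intro i; obtain ⟨m, hm⟩ := hu2 i; obtain ⟨n, hn⟩ := hv2 i
    exact ⟨m - n, by push_cast [Pi.sub_apply, hm, hn]; ring⟩

lemma memQ_pact {r : ℕ} (w : Equiv.Perm (Fin r)) {v : Fin r → ℚ} (hv : memQ v) :
    memQ (pact w v) := by
  obtain ⟨h1, h2⟩ := hv
  exact ⟨by simpa [memV, pact] using (Equiv.sum_comp w⁻¹ v).trans h1, fun i => h2 (w⁻¹ i)⟩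

lemma Fexp_key (r p' : ℕ) (hr0 : (r : ℚ) ≠ 0) (ζ : Fin r → ℚ) (σ w : Equiv.Perm (Fin r))
    (β : Fin r → ℚ) :
    Fexp r p' ζ σ (β + (r : ℚ)⁻¹ • (weylδ r - pact w (weylδ r)))
      = Fexp r p' ζ (w⁻¹ * σ) (pact w⁻¹ β) := by
  unfold Fexp
  rw [pact_mul]
  set d := weylδ r with hd
  set t := pact σ (ζ + d) with ht
  set e := pact w d with he
  have h1 : ip (pact w⁻¹ β) (pact w⁻¹ β) = ip β β := ip_pact_pact _ _ _
  have h2 : ip (pact w⁻¹ β) d = ip β e := by rw [ip_pact_left, inv_inv]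
  have h3 : ip (pact w⁻¹ β) (pact w⁻¹ t) = ip β t := ip_pact_pact _ _ _
  have h4 : ip d (pact w⁻¹ t) = ip e t := by
    rw [ip_comm, ip_pact_left, inv_inv, ip_comm]
  have hee : ip e e = ip d d := ip_pact_pact _ _ _
  have hc1 : ip d β = ip β d := ip_comm _ _
  have hc2 : ip e β = ip β e := ip_comm _ _
  have hc3 : ip e d = ip d e := ip_comm _ _
  simp only [ip_sub_right, ip_sub_left, ip_add_left, ip_add_right, ip_smul_left, ip_smul_right,
    h1, h2, h3, h4, hc1, hc2, hc3]
  field_simp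
  linear_combination (p':ℚ) * hee


/-- for `r < p'` coprime, `ζ` dominant with `⟨ζ, ε₁-ε_r⟩ ≤ p'-r`, `μ ∈ P_r`,
and `w ∈ S_r`, `λ ∈ Q_r` with `rμ - δ + w•δ = rλ`: for every `σ ∈ S_r` and `x ∈ ℚ`
there is a bijection `{α ∈ μ + Q_r : F(σ,α) = x} ≃ {α ∈ Q_r : F(w⁻¹∘σ,α) = x}`. -/
theorem stmt3 (r p' : ℕ) (hr : 2 ≤ r) (hrp' : r < p') (hcop : Nat.Coprime r p')
    (ζ : Fin r → ℚ) (hζP : memP ζ)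
    (hdom : ∀ i : Fin (r - 1), ∃ m : ℕ, ip ζ (srootF i) = (m : ℚ))
    (hlevel : ip ζ (hroot r) ≤ (p' : ℚ) - r)
    (μ : Fin r → ℚ) (hμ : memP μ) (w : Equiv.Perm (Fin r))
    (lam : Fin r → ℚ) (hlam : memQ lam)
    (h : (r : ℚ) • μ - weylδ r + pact w (weylδ r) = (r : ℚ) • lam)
    (σ : Equiv.Perm (Fin r)) (x : ℚ) :
    Nonempty
      ({α : Fin r → ℚ // (∃ β, memQ β ∧ α = μ + β) ∧ Fexp r p' ζ σ α = x} ≃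
        {α : Fin r → ℚ // memQ α ∧ Fexp r p' ζ (w⁻¹ * σ) α = x}) := by
  
  have hr0 : (r : ℚ) ≠ 0 := by positivity
  have hc : μ - lam = (r : ℚ)⁻¹ • (weylδ r - pact w (weylδ r)) := by
    have h2 : (r : ℚ) • (μ - lam) = weylδ r - pact w (weylδ r) := by
      rw [smul_sub, h.symm]; abel
    rw [← h2, inv_smul_smul₀ hr0]
  refine ⟨⟨fun a => ⟨pact w⁻¹ (a.1 - (μ - lam)), ?_, ?_⟩,
    fun b => ⟨pact w b.1 + (μ - lam), ⟨pact w b.1 - lam, ?_, by abel⟩, ?_⟩, ?_, ?_⟩⟩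
  · obtain ⟨⟨β, hβQ, hab⟩, _⟩ := a.2
    have : a.1 - (μ - lam) = lam + β := by rw [hab]; abel
    rw [this]
    exact memQ_pact _ (memQ_add hlam hβQ)
  · have := Fexp_key r p' hr0 ζ σ w (a.1 - (μ - lam))
    rw [← hc, sub_add_cancel] at this
    rw [← this]
    exact a.2.2
  · exact memQ_sub (memQ_pact _ b.2.1) hlam
  · have := Fexp_key r p' hr0 ζ σ w (pact w b.1)
    rw [← hc, pact_pact_inv] at this
    rw [this]
    exact b.2.2
  · intro a
    apply Subtype.ext
    simp only [pact_pact_inv', sub_add_cancel]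
  · intro b
    apply Subtype.ext
    simp only [add_sub_cancel_right, pact_pact_inv]
end
end

section
/- For every n ∈ ℕ, ⋃_{j ∈ ℕ} Π_{r,n+jr} = nΛ_1 + Q_r, i.e. the union over j ≥ 0 of the sets Π_{r,n+jr} equals the coset {nΛ_1 + β : β ∈ Q_r} of the root lattice. In particular rΛ_1 ∈ Q_r, so nΛ_1 + Q_r = tΛ_1 + Q_r where t is the residue of n modulo r. -/
open Finset

noncomputable section

lemma sum_ind (r : ℕ) (c : ℕ) (hc : c < r) :
    ∑ j : Fin r, (if (j : ℕ) = c then (1:ℚ) else 0) = 1 := by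
  rw [Finset.sum_eq_single (⟨c, hc⟩ : Fin r)]
  · simp
  · intro b _ hb
    exact if_neg (fun h => hb (Fin.ext h))
  · simp

lemma sum_pick {r : ℕ} (f : Fin (r-1) → ℚ) (m : ℕ) :
    ∑ i : Fin (r-1), f i * (if m = (i:ℕ) then (1:ℚ) else 0)
      = if h : m < r - 1 then f ⟨m, h⟩ else 0 := by
  split_ifs with h
  · rw [Finset.sum_eq_single (⟨m,h⟩ : Fin (r-1))]
    · simp
    · intro b _ hb
      rw [if_neg (fun hh => hb (Fin.ext hh.symm)), mul_zero]
    · simp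
  · apply Finset.sum_eq_zero; intro i _
    have := i.isLt
    rw [if_neg (by omega), mul_zero]

lemma sum_pick' {r : ℕ} (f : Fin (r-1) → ℚ) (m : ℕ) (hm : m < r) :
    ∑ i : Fin (r-1), f i * (if m = (i:ℕ)+1 then (1:ℚ) else 0)
      = if h : 1 ≤ m then f ⟨m-1, by omega⟩ else 0 := by
  split_ifs with h
  · rw [Finset.sum_eq_single (⟨m-1, by omega⟩ : Fin (r-1))]
    · rw [if_pos (show m = (m-1)+1 by omega), mul_one]
    · intro b _ hb
      rw [if_neg, mul_zero]
      intro hh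
      exact hb (Fin.ext (show (b:ℕ) = m - 1 by omega))
    · simp
  · apply Finset.sum_eq_zero; intro i _
    rw [if_neg (by omega), mul_zero]

lemma memQ_smul {r : ℕ} (q : ℚ) (m : ℤ) (hq : q = (m:ℚ)) {v : Fin r → ℚ} (hv : memQ v) :
    memQ (q • v) := by
  refine ⟨?_, fun i => ?_⟩
  · simp only [memV, Pi.smul_apply, smul_eq_mul, ← Finset.mul_sum] at *
    rw [hv.1, mul_zero]
  · obtain ⟨b, hb⟩ := hv.2 i
    exact ⟨m*b, by rw [Pi.smul_apply, smul_eq_mul, hb, hq]; push_cast; ring⟩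

lemma memQ_sum {r : ℕ} {ι : Type*} (s : Finset ι) (f : ι → Fin r → ℚ)
    (h : ∀ i ∈ s, memQ (f i)) : memQ (∑ i ∈ s, f i) := by
  induction s using Finset.cons_induction with
  | empty => exact ⟨by simp [memV], fun i => ⟨0, by simp⟩⟩
  | cons x s hx ih =>
      rw [Finset.sum_cons]
      exact memQ_add (h _ (Finset.mem_cons_self _ _))
        (ih fun i hi => h i (Finset.mem_cons_of_mem hi))

lemma memQ_rLam1 (r : ℕ) (hr : 2 ≤ r) : memQ ((r : ℚ) • Lam1 r) := by
  have hr0 : (r:ℚ) ≠ 0 := by positivity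
  refine ⟨?_, fun i => ?_⟩
  · simp only [memV, Pi.smul_apply, smul_eq_mul, Lam1, mul_sub, Finset.sum_sub_distrib,
      ← Finset.mul_sum, sum_ind r 0 (by omega), Finset.sum_const, Finset.card_univ,
      Fintype.card_fin, nsmul_eq_mul]
    field_simp
    simp
  · refine ⟨if (i:ℕ) = 0 then (r:ℤ) - 1 else -1, ?_⟩
    simp only [Pi.smul_apply, smul_eq_mul, Lam1]
    split_ifs <;> push_cast <;> field_simp <;> ring

lemma memQ_sroot {r : ℕ} (hr : 2 ≤ r) (i : Fin (r-1)) : memQ (srootF i) := by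
  have h1 : (i:ℕ) < r := by omega
  have h2 : (i:ℕ) + 1 < r := by omega
  refine ⟨?_, fun j => ?_⟩
  · simp only [memV, srootF, Finset.sum_sub_distrib, sum_ind r _ h1, sum_ind r _ h2, sub_self]
  · refine ⟨(if (j:ℕ) = (i:ℕ) then 1 else 0) - (if (j:ℕ) = (i:ℕ)+1 then 1 else 0), ?_⟩
    simp only [srootF]
    split_ifs <;> push_cast <;> ring


/-- `⋃_{j ≥ 0} Π_{r,n+jr} = nΛ₁ + Q_r`; moreover `rΛ₁ ∈ Q_r`, so
`nΛ₁ + Q_r = tΛ₁ + Q_r` where `t = n % r`. -/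
theorem stmt16 (r : ℕ) (hr : 2 ≤ r) (n : ℕ) :
    ((⋃ j : ℕ, PiWts r (n + j * r)) = {v | ∃ β, memQ β ∧ v = (n : ℚ) • Lam1 r + β}) ∧
    memQ ((r : ℚ) • Lam1 r) ∧
    ({v : Fin r → ℚ | ∃ β, memQ β ∧ v = (n : ℚ) • Lam1 r + β}
      = {v | ∃ β, memQ β ∧ v = ((n % r : ℕ) : ℚ) • Lam1 r + β}) := by
  have hQr : memQ ((r:ℚ) • Lam1 r) := memQ_rLam1 r hr
  have hr0 : (r:ℚ) ≠ 0 := by positivity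
  refine ⟨?_, hQr, ?_⟩
  · ext v
    simp only [Set.mem_iUnion, PiWts, Set.mem_setOf_eq]
    constructor
    · rintro ⟨j, a, ha0, han, hmono, rfl⟩
      refine ⟨((j*r : ℕ):ℚ) • Lam1 r - ∑ i, (a i:ℚ) • srootF i, ?_, ?_⟩
      · refine memQ_sub ?_ (memQ_sum _ _ fun i _ => memQ_smul _ (a i) rfl (memQ_sroot hr i))
        have : ((j*r:ℕ):ℚ) • Lam1 r = ((j:ℕ):ℚ) • ((r:ℚ) • Lam1 r) := by
          rw [smul_smul]; norm_cast
        rw [this]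
        exact memQ_smul _ (j:ℤ) (by push_cast; ring) hQr
      · have hcast : ((n + j*r : ℕ):ℚ) = (n:ℚ) + ((j*r:ℕ):ℚ) := by push_cast; ring
        rw [hcast, add_smul, add_sub_assoc]
    · rintro ⟨β, ⟨hβV, hβZ⟩, rfl⟩
      choose c hc using hβZ
      set C : ℕ → ℤ := fun l => if h : l < r then c ⟨l, h⟩ else 0 with hCdef
      have hCval : ∀ i : Fin r, C (i:ℕ) = c i := by
        intro i; simp [hCdef, i.isLt]
      set j : ℕ := ∑ l : Fin r, (c l).natAbs with hjdef
      have hj0 : (0:ℤ) ≤ (j:ℤ) := Int.natCast_nonneg j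
      have hjabs : ∀ s : Finset ℕ, s ⊆ Finset.range r → |∑ l ∈ s, C l| ≤ (j:ℤ) := by
        intro s hs
        calc |∑ l ∈ s, C l| ≤ ∑ l ∈ s, |C l| := Finset.abs_sum_le_sum_abs _ _
          _ ≤ ∑ l ∈ Finset.range r, |C l| :=
              Finset.sum_le_sum_of_subset_of_nonneg hs (fun _ _ _ => abs_nonneg _)
          _ = (j:ℤ) := by
              rw [hjdef, ← Fin.sum_univ_eq_sum_range (fun l => |C l|)]
              push_cast
              refine Finset.sum_congr rfl fun i _ => ?_
              rw [hCval]
      have hsum0 : ∑ l ∈ Finset.range r, C l = 0 := by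
        have h1 : ∑ i : Fin r, (c i : ℚ) = 0 := by
          have := hβV
          unfold memV at this
          rw [Finset.sum_congr rfl fun i _ => hc i] at this
          exact this
        have h2 : ∑ i : Fin r, c i = 0 := by exact_mod_cast h1
        rw [← Fin.sum_univ_eq_sum_range C]
        simpa only [hCval] using h2
      refine ⟨j, fun i => (j:ℤ) * ((r - 1 - (i:ℕ) : ℕ) : ℤ) - ∑ l ∈ Finset.range ((i:ℕ)+1), C l,
        ?_, ?_, ?_, ?_⟩
      · intro i
        dsimp only
        have hi := i.isLt
        have h1 : |∑ l ∈ Finset.range ((i:ℕ)+1), C l| ≤ (j:ℤ) :=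
          hjabs _ (Finset.range_subset_range.2 (by omega))
        have h2 : (1:ℤ) ≤ ((r - 1 - (i:ℕ) : ℕ) : ℤ) := by omega
        have h3 := mul_le_mul_of_nonneg_left h2 hj0
        have h4 := le_abs_self (∑ l ∈ Finset.range ((i:ℕ)+1), C l)
        linarith
      · intro i
        dsimp only
        have hi := i.isLt
        have h1 : |∑ l ∈ Finset.range ((i:ℕ)+1), C l| ≤ (j:ℤ) :=
          hjabs _ (Finset.range_subset_range.2 (by omega))
        have h2 : ((r - 1 - (i:ℕ) : ℕ) : ℤ) ≤ (r:ℤ) - 1 := by omega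
        have h3 := mul_le_mul_of_nonneg_left h2 hj0
        have h4 := neg_abs_le (∑ l ∈ Finset.range ((i:ℕ)+1), C l)
        have h5 : (0:ℤ) ≤ (n:ℤ) := Int.natCast_nonneg n
        push_cast
        nlinarith
      · intro i i' hii'
        dsimp only
        rcases eq_or_lt_of_le hii' with heq | hlt
        · rw [heq]
        · have hvlt : (i:ℕ) < (i':ℕ) := hlt
          have hi' := i'.isLt
          have hdiff : ∑ l ∈ Finset.range ((i':ℕ)+1), C l - ∑ l ∈ Finset.range ((i:ℕ)+1), C l
              = ∑ l ∈ Finset.Ico ((i:ℕ)+1) ((i':ℕ)+1), C l :=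
            (Finset.sum_Ico_eq_sub _ (by omega)).symm
          have hIco : |∑ l ∈ Finset.Ico ((i:ℕ)+1) ((i':ℕ)+1), C l| ≤ (j:ℤ) := by
            refine hjabs _ ?_
            intro x hx
            simp only [Finset.mem_Ico, Finset.mem_range] at *
            omega
          have hk : (1:ℤ) ≤ ((r-1-(i:ℕ) : ℕ):ℤ) - ((r-1-(i':ℕ) : ℕ):ℤ) := by omega
          have h3 := mul_le_mul_of_nonneg_left hk hj0
          have h4 := neg_abs_le (∑ l ∈ Finset.Ico ((i:ℕ)+1) ((i':ℕ)+1), C l)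
          nlinarith
      · funext m
        have hmlt := m.isLt
        simp only [Pi.add_apply, Pi.sub_apply, Pi.smul_apply, smul_eq_mul, Finset.sum_apply,
          Lam1, srootF, mul_sub, Finset.sum_sub_distrib, hc m]
        rw [sum_pick (fun i : Fin (r-1) =>
              (((j:ℤ) * ((r - 1 - (i:ℕ) : ℕ) : ℤ) - ∑ l ∈ Finset.range ((i:ℕ)+1), C l : ℤ) : ℚ)) (m:ℕ),
            sum_pick' (fun i : Fin (r-1) =>
              (((j:ℤ) * ((r - 1 - (i:ℕ) : ℕ) : ℤ) - ∑ l ∈ Finset.range ((i:ℕ)+1), C l : ℤ) : ℚ)) (m:ℕ) hmlt]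
        by_cases hm0 : (m:ℕ) = 0
        · rw [dif_pos (show (m:ℕ) < r - 1 by omega), dif_neg (show ¬ 1 ≤ (m:ℕ) by omega),
            if_pos hm0]
          dsimp only
          have e1 : C 0 = c m := by rw [← hm0]; exact hCval m
          simp only [hm0, Nat.sub_zero, zero_add, Finset.sum_range_one, e1]
          push_cast [Nat.cast_sub (show 1 ≤ r by omega)]
          field_simp
          ring
        · by_cases hmtop : (m:ℕ) = r - 1
          · rw [dif_neg (show ¬ (m:ℕ) < r - 1 by omega), dif_pos (show 1 ≤ (m:ℕ) by omega),
              if_neg hm0]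
            dsimp only
            have e2 : (m:ℕ) - 1 + 1 = (m:ℕ) := by omega
            have e3 : r - 1 - ((m:ℕ) - 1) = 1 := by omega
            rw [e2, e3]
            have e4 : ∑ l ∈ Finset.range (m:ℕ), C l = - c m := by
              have hrm : r = (m:ℕ) + 1 := by omega
              rw [hrm, Finset.sum_range_succ, hCval m] at hsum0
              omega
            rw [e4]
            push_cast
            field_simp
            ring
          · rw [dif_pos (show (m:ℕ) < r - 1 by omega), dif_pos (show 1 ≤ (m:ℕ) by omega),
              if_neg hm0]
            dsimp only
            have e2 : (m:ℕ) - 1 + 1 = (m:ℕ) := by omega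
            have e3 : r - 1 - ((m:ℕ) - 1) = (r - 1 - (m:ℕ)) + 1 := by omega
            rw [e2, e3, Finset.sum_range_succ, hCval m]
            push_cast
            field_simp
            ring
  · ext v
    simp only [Set.mem_setOf_eq]
    have hnm : (n:ℚ) = ((n % r : ℕ):ℚ) + ((n / r : ℕ):ℚ) * (r:ℚ) := by
      exact_mod_cast (Nat.mod_add_div' n r).symm
    constructor
    · rintro ⟨β, hβ, rfl⟩
      refine ⟨β + ((n / r : ℕ):ℚ) • ((r:ℚ) • Lam1 r),
        memQ_add hβ (memQ_smul _ ((n/r : ℕ) : ℤ) (by norm_cast) hQr), ?_⟩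
      rw [hnm, add_smul, smul_smul]
      abel
    · rintro ⟨β, hβ, rfl⟩
      refine ⟨β - ((n / r : ℕ):ℚ) • ((r:ℚ) • Lam1 r),
        memQ_sub hβ (memQ_smul _ ((n/r : ℕ) : ℤ) (by norm_cast) hQr), ?_⟩
      rw [hnm, add_smul, smul_smul]
      abel
end
end
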